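/- With the Kronecker-product construction below, the higher-dimensional chirality operator Γ_P := i^⌊(m+k−1)/2⌋ Γ_0 Γ_1 ⋯ Γ_{m+k−1} satisfies the factorization Γ_P = (Γ_M)^{k+1} ⊗ Γ_K; in particular Γ_P = Γ_M ⊗ Γ_K if k is even and Γ_P = I ⊗ Γ_K if k is odd. -/

import Mathlib

open Matrix Kronecker

/-- The Minkowski chirality operator `Γ_M := i ^ ⌊(m-1)/2⌋ γ₀ ⋯ γ_{m-1}`. -/
noncomputable def minkChirality (m : ℕ)
    (γ : Fin m → Matrix (Fin (2 ^ (m / 2))) (Fin (2 ^ (m / 2))) ℂ) :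
    Matrix (Fin (2 ^ (m / 2))) (Fin (2 ^ (m / 2))) ℂ :=
  (Complex.I ^ ((m - 1) / 2)) • (List.ofFn γ).prod

/-- The internal chirality operator `Γ_K := i ^ ⌊(k+1)/2⌋ γ̃₁ ⋯ γ̃_k`. -/
noncomputable def intChirality (k : ℕ)
    (γt : Fin k → Matrix (Fin (2 ^ (k / 2))) (Fin (2 ^ (k / 2))) ℂ) :
    Matrix (Fin (2 ^ (k / 2))) (Fin (2 ^ (k / 2))) ℂ :=
  (Complex.I ^ ((k + 1) / 2)) • (List.ofFn γt).prod

/-- The Kronecker-product construction of higher-dimensional gamma matrices. -/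
noncomputable def bigGamma (m k : ℕ)
    (γ : Fin m → Matrix (Fin (2 ^ (m / 2))) (Fin (2 ^ (m / 2))) ℂ)
    (γt : Fin k → Matrix (Fin (2 ^ (k / 2))) (Fin (2 ^ (k / 2))) ℂ) :
    Fin (m + k) →
      Matrix (Fin (2 ^ (m / 2)) × Fin (2 ^ (k / 2))) (Fin (2 ^ (m / 2)) × Fin (2 ^ (k / 2))) ℂ :=
  fun a =>
    if h : (a : ℕ) < m then (γ ⟨a, h⟩) ⊗ₖ (1 : Matrix (Fin (2 ^ (k / 2))) (Fin (2 ^ (k / 2))) ℂ)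
    else (minkChirality m γ) ⊗ₖ (γt ⟨(a : ℕ) - m, by have := a.isLt; omega⟩)

/-- The higher-dimensional chirality operator
`Γ_P := i ^ ⌊(m+k-1)/2⌋ Γ₀ Γ₁ ⋯ Γ_{m+k-1}`. -/
noncomputable def bigChirality (m k : ℕ)
    (γ : Fin m → Matrix (Fin (2 ^ (m / 2))) (Fin (2 ^ (m / 2))) ℂ)
    (γt : Fin k → Matrix (Fin (2 ^ (k / 2))) (Fin (2 ^ (k / 2))) ℂ) :
    Matrix (Fin (2 ^ (m / 2)) × Fin (2 ^ (k / 2))) (Fin (2 ^ (m / 2)) × Fin (2 ^ (k / 2))) ℂ :=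
  (Complex.I ^ ((m + k - 1) / 2)) • (List.ofFn (bigGamma m k γ γt)).prod

section Helpers

variable {R : Type*} [Ring R] [Algebra ℂ R]

lemma prod_mul_anticomm (x : R) : ∀ (L : List R), (∀ y ∈ L, y * x = -(x * y)) →
    L.prod * x = ((-1 : ℂ) ^ L.length) • (x * L.prod)
  | [], _ => by simp
  | a :: L, h => by
    have ha := h a List.mem_cons_self
    have hL := prod_mul_anticomm x L (fun y hy => h y (List.mem_cons_of_mem _ hy))
    simp only [List.prod_cons, List.length_cons]
    rw [mul_assoc, hL, mul_smul_comm, ← mul_assoc, ha, neg_mul, smul_neg, mul_assoc,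
      pow_succ, mul_neg_one, neg_smul]

lemma ofFn_prod_sq : ∀ (n : ℕ) (f : Fin n → R) (s : Fin n → ℂ),
    (∀ i j, i ≠ j → f j * f i = -(f i * f j)) →
    (∀ i, f i * f i = s i • 1) →
    (List.ofFn f).prod * (List.ofFn f).prod
      = (((-1 : ℂ) ^ (n * (n - 1) / 2)) * ∏ i, s i) • 1
  | 0, f, s, _, _ => by simp
  | n + 1, f, s, hac, hsq => by
    have ih := ofFn_prod_sq n (fun i => f i.succ) (fun i => s i.succ)
      (fun i j hij => hac i.succ j.succ (fun h => hij (Fin.succ_injective _ h)))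
      (fun i => hsq i.succ)
    have hx : ∀ y ∈ List.ofFn (fun i : Fin n => f i.succ), y * f 0 = -(f 0 * y) := by
      intro y hy
      obtain ⟨i, rfl⟩ := List.mem_ofFn.1 hy
      exact hac 0 i.succ (Fin.succ_ne_zero i).symm
    have hT := prod_mul_anticomm (f 0) _ hx
    rw [List.length_ofFn] at hT
    have htri : (n + 1) * n / 2 = n + n * (n - 1) / 2 := by
      rcases n with _ | d
      · simp
      · obtain ⟨e, he⟩ := Nat.even_mul_succ_self d
        have he2 : (d + 1) * d = 2 * e := by rw [mul_comm]; omega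
        have h1 : (d + 1 + 1) * (d + 1) = 2 * (d + 1) + (d + 1) * d := by ring
        simp only [Nat.add_sub_cancel]
        rw [h1, he2]
        omega
    simp only [Nat.add_sub_cancel]
    rw [List.ofFn_succ, List.prod_cons, mul_assoc, ← mul_assoc _ (f 0), hT,
      smul_mul_assoc, mul_smul_comm, ← mul_assoc, ← mul_assoc, hsq 0, smul_mul_assoc,
      one_mul, smul_mul_assoc, ih, smul_smul, smul_smul, Fin.prod_univ_succ, htri, pow_add]
    ring_nf

end Helpers

lemma mink_sq (m : ℕ) (hm : Even m) (hm2 : 2 ≤ m)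
    (γ : Fin m → Matrix (Fin (2 ^ (m / 2))) (Fin (2 ^ (m / 2))) ℂ)
    (hγ : ∀ μ ν : Fin m,
      γ μ * γ ν + γ ν * γ μ
        = (if μ = ν then (if (μ : ℕ) = 0 then (2 : ℂ) else -2) else 0) • (1 : Matrix _ _ ℂ)) :
    minkChirality m γ ^ 2 = 1 := by
  have hm' : m % 2 = 0 := Nat.even_iff.1 hm
  obtain ⟨a, ha⟩ : ∃ a, m = 2 * a + 2 := ⟨m / 2 - 1, by omega⟩
  have hsq : ∀ i : Fin m, γ i * γ i = (if (i : ℕ) = 0 then (1 : ℂ) else -1) • 1 := by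
    intro i
    have h := hγ i i
    rw [if_pos rfl] at h
    have h2 : (2 : ℂ) • (γ i * γ i) = (if (i : ℕ) = 0 then (2 : ℂ) else -2) • 1 := by
      rw [two_smul]; exact h
    have h3 := congrArg (fun X => (2⁻¹ : ℂ) • X) h2
    simp only [smul_smul] at h3
    rw [show (2⁻¹ : ℂ) * 2 = 1 by norm_num, one_smul] at h3
    rw [h3]
    split <;> norm_num
  have hac : ∀ i j : Fin m, i ≠ j → γ j * γ i = -(γ i * γ j) := by
    intro i j hij
    have h := hγ i j
    rw [if_neg hij, zero_smul] at h
    exact eq_neg_of_add_eq_zero_right h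
  have key := ofFn_prod_sq m γ (fun i => if (i : ℕ) = 0 then (1 : ℂ) else -1) hac hsq
  subst ha
  have hprod : ∏ i : Fin (2 * a + 2), (if (i : ℕ) = 0 then (1 : ℂ) else -1)
      = (-1) ^ (2 * a + 1) := by
    rw [show 2 * a + 2 = (2 * a + 1) + 1 from rfl, Fin.prod_univ_succ]
    simp [Finset.prod_const]
  rw [hprod] at key
  have hb : (2 * a + 2) * ((2 * a + 2) - 1) / 2 = 2 * (a * a) + 3 * a + 1 := by
    have h1 : (2 * a + 2) * ((2 * a + 2) - 1) = 2 * (2 * (a * a) + 3 * a + 1) := by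
      rw [show (2 * a + 2) - 1 = 2 * a + 1 from rfl]; ring
    rw [h1]
    generalize (2 * (a * a) + 3 * a + 1) = b
    omega
  rw [hb] at key
  have he1 : (2 * a + 2 - 1) / 2 = a := by omega
  rw [minkChirality, smul_pow, he1, pow_two ((List.ofFn γ).prod), key, smul_smul]
  have hS : (Complex.I ^ a * Complex.I ^ a)
      * ((-1 : ℂ) ^ (2 * (a * a) + 3 * a + 1) * (-1) ^ (2 * a + 1)) = 1 := by
    have hi : Complex.I ^ a * Complex.I ^ a = (-1 : ℂ) ^ a := by
      rw [← pow_add, show a + a = 2 * a by omega, pow_mul, Complex.I_sq]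
    rw [hi, ← pow_add, ← pow_add]
    exact Even.neg_one_pow ⟨a * a + 3 * a + 1, by ring⟩
  rw [pow_two (Complex.I ^ a), hS, one_smul]

section Kron

variable {p q : ℕ}

lemma prod_kron_one : ∀ (L : List (Matrix (Fin p) (Fin p) ℂ)),
    (L.map (fun A => A ⊗ₖ (1 : Matrix (Fin q) (Fin q) ℂ))).prod = L.prod ⊗ₖ 1
  | [] => by simp
  | A :: L => by
    rw [List.map_cons, List.prod_cons, List.prod_cons, prod_kron_one L,
      ← Matrix.mul_kronecker_mul, mul_one]

lemma kron_prod_const (A : Matrix (Fin p) (Fin p) ℂ) :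
    ∀ (L : List (Matrix (Fin q) (Fin q) ℂ)),
    (L.map (fun B => A ⊗ₖ B)).prod = (A ^ L.length) ⊗ₖ L.prod
  | [] => by simp
  | B :: L => by
    rw [List.map_cons, List.prod_cons, List.prod_cons, kron_prod_const A L,
      ← Matrix.mul_kronecker_mul, List.length_cons, pow_succ']

end Kron


/-- the higher-dimensional chirality operator factorizes as
`Γ_P = (Γ_M) ^ (k+1) ⊗ Γ_K`; in particular `Γ_P = Γ_M ⊗ Γ_K` when `k` is even and
`Γ_P = I ⊗ Γ_K` when `k` is odd. -/
theorem bigChirality_factorization (m k : ℕ) (hm : Even m) (hm2 : 2 ≤ m) (hk : 1 ≤ k)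
    (γ : Fin m → Matrix (Fin (2 ^ (m / 2))) (Fin (2 ^ (m / 2))) ℂ)
    (hγ : ∀ μ ν : Fin m,
      γ μ * γ ν + γ ν * γ μ
        = (if μ = ν then (if (μ : ℕ) = 0 then (2 : ℂ) else -2) else 0) • (1 : Matrix _ _ ℂ))
    (γt : Fin k → Matrix (Fin (2 ^ (k / 2))) (Fin (2 ^ (k / 2))) ℂ)
    (hγt : ∀ j l : Fin k,
      γt j * γt l + γt l * γt j = (if j = l then (-2 : ℂ) else 0) • (1 : Matrix _ _ ℂ)) :
    bigChirality m k γ γt = ((minkChirality m γ) ^ (k + 1)) ⊗ₖ (intChirality k γt) ∧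
    (Even k → bigChirality m k γ γt = (minkChirality m γ) ⊗ₖ (intChirality k γt)) ∧
    (Odd k → bigChirality m k γ γt
        = (1 : Matrix (Fin (2 ^ (m / 2))) (Fin (2 ^ (m / 2))) ℂ) ⊗ₖ (intChirality k γt)) := by
  have hm' : m % 2 = 0 := Nat.even_iff.1 hm
  set GM := minkChirality m γ with hGM
  have hGM2 : GM ^ 2 = 1 := by rw [hGM]; exact mink_sq m hm hm2 γ hγ
  have hsplit : List.ofFn (bigGamma m k γ γt)
      = (List.ofFn fun i : Fin m =>
          (γ i) ⊗ₖ (1 : Matrix (Fin (2 ^ (k / 2))) (Fin (2 ^ (k / 2))) ℂ))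
        ++ (List.ofFn fun j : Fin k => GM ⊗ₖ γt j) := by
    rw [List.ofFn_add]
    congr 1
    · exact congrArg List.ofFn (funext fun i => by simp [bigGamma, i.isLt])
    · exact congrArg List.ofFn (funext fun j => by
        simp [bigGamma, show ¬ (m + (j : ℕ) < m) from by omega, hGM])
  have e1 : (List.ofFn fun i : Fin m =>
      (γ i) ⊗ₖ (1 : Matrix (Fin (2 ^ (k / 2))) (Fin (2 ^ (k / 2))) ℂ)).prod
      = (List.ofFn γ).prod ⊗ₖ 1 := by
    rw [show (fun i : Fin m =>
        (γ i) ⊗ₖ (1 : Matrix (Fin (2 ^ (k / 2))) (Fin (2 ^ (k / 2))) ℂ))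
      = (fun A => A ⊗ₖ (1 : Matrix (Fin (2 ^ (k / 2))) (Fin (2 ^ (k / 2))) ℂ)) ∘ γ from rfl,
      ← List.map_ofFn, prod_kron_one]
  have e2 : (List.ofFn fun j : Fin k => GM ⊗ₖ γt j).prod
      = (GM ^ k) ⊗ₖ (List.ofFn γt).prod := by
    rw [show (fun j : Fin k => GM ⊗ₖ γt j) = (fun B => GM ⊗ₖ B) ∘ γt from rfl,
      ← List.map_ofFn, kron_prod_const, List.length_ofFn]
  have h1 : bigChirality m k γ γt
      = (Complex.I ^ ((m + k - 1) / 2) * (Complex.I ^ ((m - 1) / 2)) ^ k) •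
        (((List.ofFn γ).prod ^ (k + 1)) ⊗ₖ (List.ofFn γt).prod) := by
    rw [bigChirality, hsplit, List.prod_append, e1, e2, ← Matrix.mul_kronecker_mul, one_mul,
      hGM, minkChirality, smul_pow, mul_smul_comm, ← pow_succ', Matrix.smul_kronecker, smul_smul]
  have h2 : (GM ^ (k + 1)) ⊗ₖ intChirality k γt
      = ((Complex.I ^ ((m - 1) / 2)) ^ (k + 1) * Complex.I ^ ((k + 1) / 2)) •
        (((List.ofFn γ).prod ^ (k + 1)) ⊗ₖ (List.ofFn γt).prod) := by
    rw [hGM, minkChirality, intChirality, smul_pow, Matrix.smul_kronecker,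
      Matrix.kronecker_smul, smul_smul]
  have hsc : Complex.I ^ ((m + k - 1) / 2) * (Complex.I ^ ((m - 1) / 2)) ^ k
      = (Complex.I ^ ((m - 1) / 2)) ^ (k + 1) * Complex.I ^ ((k + 1) / 2) := by
    have he : (m + k - 1) / 2 = (m - 1) / 2 + (k + 1) / 2 := by omega
    rw [he, pow_add]; ring
  have hfac : bigChirality m k γ γt = (GM ^ (k + 1)) ⊗ₖ intChirality k γt := by
    rw [h1, h2, hsc]
  refine ⟨hfac, ?_, ?_⟩
  · rintro ⟨t, rfl⟩
    have hp : GM ^ (t + t + 1) = GM := by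
      rw [pow_succ, ← two_mul, pow_mul, hGM2, one_pow, one_mul]
    rw [hfac, hp]
  · rintro ⟨t, rfl⟩
    have hp : GM ^ (2 * t + 1 + 1) = 1 := by
      rw [show 2 * t + 1 + 1 = 2 * (t + 1) by ring, pow_mul, hGM2, one_pow]
    rw [hfac, hp]
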